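/- Well-posedness of the stabilised discrete problem (Theorem 2.3, solvability): If (u_h, λ_h) ∈ V_h × Λ_h satisfies the homogeneous stabilised discrete problem a(u_h,v_h) + b(λ_h,v_h) + b(μ_h,u_h) − s(λ_h, μ_h) = 0 for all (v_h, μ_h) ∈ V_h × Λ_h, then u_h = 0 and λ_h = 0. Consequently, if V_h and Λ_h are finite-dimensional, then for every linear functional F : V → ℝ the stabilised discrete problem, find (u_h, λ_h) ∈ V_h × Λ_h with a(u_h,v_h) + b(λ_h,v_h) + b(μ_h,u_h) − s(λ_h, μ_h) = F(v_h) for all (v_h, μ_h) ∈ V_h × Λ_h, admits exactly one solution. -/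

import Mathlib

set_option maxHeartbeats 1000000 in
/-- **Well-posedness of the stabilised discrete problem (Theorem 2.3, solvability).**
If `(u_h, λ_h) ∈ V_h × Λ_h` satisfies the homogeneous stabilised discrete problem then
`u_h = 0` and `λ_h = 0`; consequently, if `V_h` and `Λ_h` are finite-dimensional, for every
linear functional `F : V → ℝ` the stabilised discrete problem admits exactly one
solution. -/
theorem wellposedness_stabilised_discrete_problem
    {V L : Type*} [NormedAddCommGroup V] [NormedSpace ℝ V]
    [NormedAddCommGroup L] [NormedSpace ℝ L]
    -- bilinear forms; continuity of b
    (a : V →ₗ[ℝ] V →ₗ[ℝ] ℝ) (b : L →ₗ[ℝ] V →ₗ[ℝ] ℝ)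
    (Mb : ℝ) (hMb : 0 < Mb)
    (hb_cont : ∀ (lam : L) (v : V), |b lam v| ≤ Mb * ‖lam‖ * ‖v‖)
    -- continuous inf-sup condition
    (β : ℝ) (hβ : 0 < β)
    (h_infsup : ∀ lam : L, β * ‖lam‖ ≤ ⨆ v : {v : V // v ≠ 0}, b lam v.1 / ‖v.1‖)
    -- discrete subspaces
    (Vh : Submodule ℝ V) (Lh Λh : Submodule ℝ L)
    -- discrete norm on V_h
    (nVh : V → ℝ) (CV : ℝ) (hCV : 0 < CV)
    (hnVh_nonneg : ∀ v ∈ Vh, 0 ≤ nVh v)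
    (hnVh_def : ∀ v ∈ Vh, nVh v = 0 → v = 0)
    (hnVh_add : ∀ v ∈ Vh, ∀ w ∈ Vh, nVh (v + w) ≤ nVh v + nVh w)
    (hnVh_smul : ∀ (r : ℝ), ∀ v ∈ Vh, nVh (r • v) = |r| * nVh v)
    (hV_comp : ∀ v ∈ Vh, ‖v‖ ≤ CV * nVh v)
    -- discrete norm on L_h + Λ_h
    (nLh : L → ℝ)
    (hnLh_nonneg : ∀ x ∈ Lh ⊔ Λh, 0 ≤ nLh x)
    (hnLh_def : ∀ x ∈ Lh ⊔ Λh, nLh x = 0 → x = 0)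
    (hnLh_add : ∀ x ∈ Lh ⊔ Λh, ∀ y ∈ Lh ⊔ Λh, nLh (x + y) ≤ nLh x + nLh y)
    (hnLh_smul : ∀ (r : ℝ), ∀ x ∈ Lh ⊔ Λh, nLh (r • x) = |r| * nLh x)
    -- discrete continuities
    (ha_disc : ∀ u ∈ Vh, ∀ v ∈ Vh, |a u v| ≤ nVh u * nVh v)
    (hb_disc : ∀ lam ∈ Lh ⊔ Λh, ∀ v ∈ Vh, |b lam v| ≤ nLh lam * nVh v)
    -- Fortin operator
    (πF : V →ₗ[ℝ] V) (hπF_mem : ∀ v : V, πF v ∈ Vh)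
    (hπF_orth : ∀ μ ∈ Lh, ∀ v : V, b μ (v - πF v) = 0)
    (CF : ℝ) (hCF : 0 < CF)
    (hπF_stab : ∀ v : V, ‖πF v‖ ≤ CF * ‖v‖)
    -- stabilising projection π_L : Λ_h → L_h
    (πL : L →ₗ[ℝ] L) (hπL_mem : ∀ x ∈ Λh, πL x ∈ Lh)
    (Cπ : ℝ) (hCπ : 0 < Cπ)
    (hπL_cont : ∀ x ∈ Λh, ∀ v : V, |b (x - πL x) v| ≤ Cπ * nLh (x - πL x) * ‖v‖)
    -- stabilisation form
    (s : L →ₗ[ℝ] L →ₗ[ℝ] ℝ)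
    (hs_symm : ∀ x ∈ Λh, ∀ y ∈ Λh, s x y = s y x)
    (hs_pos : ∀ x ∈ Λh, 0 ≤ s x x)
    (Cs : ℝ) (hCs : 0 < Cs)
    (hs_stab : ∀ x ∈ Λh, nLh (x - πL x) ^ 2 ≤ Cs * s x x)
    -- coercivity assumption
    (ξh : V → L) (hξh_mem : ∀ u ∈ Vh, ξh u ∈ Λh)
    (αξ cs : ℝ) (hαξ : 0 < αξ) (hcs : 0 ≤ cs)
    (hcoer : ∀ u ∈ Vh, αξ * nVh u ^ 2 ≤ a u u + b (ξh u) u)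
    (hξs : ∀ u ∈ Vh, Real.sqrt (s (ξh u) (ξh u)) ≤ cs * nVh u)
    (hsmall : cs ^ 2 < 2 * αξ) :
    -- homogeneous problem has only the trivial solution
    (∀ uh ∈ Vh, ∀ lamh ∈ Λh,
      (∀ v ∈ Vh, ∀ μ ∈ Λh, a uh v + b lamh v + b μ uh - s lamh μ = 0) →
      uh = 0 ∧ lamh = 0) ∧
    -- in finite dimension: existence and uniqueness for every right-hand side
    (FiniteDimensional ℝ Vh → FiniteDimensional ℝ Λh →
      ∀ F : V →ₗ[ℝ] ℝ, ∃! p : Vh × Λh,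
        ∀ v ∈ Vh, ∀ μ ∈ Λh,
          a (p.1 : V) v + b (p.2 : L) v + b μ (p.1 : V) - s (p.2 : L) μ = F v) := by
  classical
  -- Cauchy–Schwarz for the psd symmetric form s on Λh
  have hCS : ∀ x ∈ Λh, ∀ y ∈ Λh,
      s x y ≤ Real.sqrt (s x x) * Real.sqrt (s y y) := by
    intro x hx y hy
    have hq : ∀ t : ℝ, 0 ≤ (s y y) * (t * t) + (2 * s x y) * t + s x x := by
      intro t
      have h0 := hs_pos (x + t • y) (Λh.add_mem hx (Λh.smul_mem t hy))
      have hexp : s (x + t • y) (x + t • y)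
          = s x x + t * s x y + t * s y x + t * t * s y y := by
        simp only [map_add, map_smul, LinearMap.add_apply, LinearMap.smul_apply,
          smul_eq_mul]
        ring
      rw [hexp, hs_symm y hy x hx] at h0
      linarith
    have hd := discrim_le_zero hq
    rw [discrim] at hd
    have h1 : (s x y) ^ 2 ≤ s x x * s y y := by nlinarith
    calc s x y ≤ |s x y| := le_abs_self _
      _ = Real.sqrt ((s x y) ^ 2) := (Real.sqrt_sq_eq_abs _).symm
      _ ≤ Real.sqrt (s x x * s y y) := Real.sqrt_le_sqrt h1
      _ = Real.sqrt (s x x) * Real.sqrt (s y y) := Real.sqrt_mul (hs_pos x hx) _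
  have hhom : ∀ uh ∈ Vh, ∀ lamh ∈ Λh,
      (∀ v ∈ Vh, ∀ μ ∈ Λh, a uh v + b lamh v + b μ uh - s lamh μ = 0) →
      uh = 0 ∧ lamh = 0 := by
    intro uh huh lamh hlam heq
    have hξmem := hξh_mem uh huh
    have h1 := heq uh huh (ξh uh) hξmem
    have h2 := heq 0 Vh.zero_mem lamh hlam
    simp only [map_zero, LinearMap.zero_apply, zero_add] at h2
    -- h2 : b lamh uh - s lamh lamh = 0
    set n := nVh uh with hn_def
    set t := Real.sqrt (s lamh lamh) with ht_def
    have hn0 : 0 ≤ n := hnVh_nonneg uh huh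
    have ht0 : 0 ≤ t := Real.sqrt_nonneg _
    have hts : t ^ 2 = s lamh lamh := Real.sq_sqrt (hs_pos lamh hlam)
    have hcoer' := hcoer uh huh
    have hCS1 := hCS lamh hlam (ξh uh) hξmem
    have hξn := hξs uh huh
    have hkey : αξ * n ^ 2 + t ^ 2 ≤ t * (cs * n) := by
      nlinarith [mul_le_mul_of_nonneg_left hξn ht0]
    have h2' : (2 * αξ - cs ^ 2) * n ^ 2 + t ^ 2 ≤ 0 := by
      nlinarith [sq_nonneg (t - cs * n)]
    have hn2 : n ^ 2 ≤ 0 := by nlinarith [sq_nonneg t]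
    have hn_eq : n = 0 :=
      pow_eq_zero_iff two_ne_zero |>.mp (le_antisymm hn2 (sq_nonneg n))
    have ht_eq : t = 0 := by
      rw [hn_eq] at h2'
      have ht2 : t ^ 2 ≤ 0 := by nlinarith
      exact pow_eq_zero_iff two_ne_zero |>.mp (le_antisymm ht2 (sq_nonneg t))
    have huh0 : uh = 0 := hnVh_def uh huh hn_eq
    have hs0 : s lamh lamh = 0 := by rw [← hts, ht_eq]; ring
    subst huh0
    -- b lamh v = 0 for all v ∈ Vh
    have hbVh : ∀ v ∈ Vh, b lamh v = 0 := by
      intro v hv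
      have h3 := heq v hv 0 Λh.zero_mem
      simp only [map_zero, LinearMap.zero_apply] at h3
      linarith
    -- nLh (lamh - πL lamh) = 0
    have hx2 : nLh (lamh - πL lamh) ^ 2 ≤ 0 := by
      have := hs_stab lamh hlam
      rw [hs0] at this
      linarith
    have hx : nLh (lamh - πL lamh) = 0 :=
      pow_eq_zero_iff two_ne_zero |>.mp (le_antisymm hx2 (sq_nonneg _))
    have hres : ∀ w : V, b (lamh - πL lamh) w = 0 := by
      intro w
      have h := hπL_cont lamh hlam w
      rw [hx, mul_zero, zero_mul] at h
      exact abs_nonpos_iff.mp h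
    have hbv : ∀ v : V, b lamh v = 0 := by
      intro v
      have e1 : b (lamh - πL lamh) v = b lamh v - b (πL lamh) v := by
        simp [map_sub]
      have e1' : b (lamh - πL lamh) (πF v) = b lamh (πF v) - b (πL lamh) (πF v) := by
        simp [map_sub]
      have e2 : b (πL lamh) (v - πF v) = 0 := hπF_orth (πL lamh) (hπL_mem lamh hlam) v
      have e2' : b (πL lamh) (v - πF v) = b (πL lamh) v - b (πL lamh) (πF v) :=
        map_sub _ _ _
      have e3 : b lamh (πF v) = 0 := hbVh (πF v) (hπF_mem v)
      have e4 := hres v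
      have e5 := hres (πF v)
      linarith
    have hsup : (⨆ v : {v : V // v ≠ 0}, b lamh v.1 / ‖v.1‖) ≤ 0 :=
      Real.iSup_nonpos fun v => by rw [hbv v.1]; simp
    have hbetalam : β * ‖lamh‖ ≤ β * 0 := by
      rw [mul_zero]; exact le_trans (h_infsup lamh) hsup
    have hlam0 : ‖lamh‖ = 0 :=
      le_antisymm ((mul_le_mul_iff_right₀ hβ).mp hbetalam) (norm_nonneg _)
    exact ⟨rfl, norm_eq_zero.mp hlam0⟩
  refine ⟨hhom, ?_⟩
  intro _ _ F
  let T : (Vh × Λh) →ₗ[ℝ] (Module.Dual ℝ Vh × Module.Dual ℝ Λh) :=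
    { toFun := fun p => ((a p.1.1 + b p.2.1).comp Vh.subtype,
                         (b.flip p.1.1 - s p.2.1).comp Λh.subtype)
      map_add' := by
        intro p q
        refine Prod.ext (LinearMap.ext fun x => ?_) (LinearMap.ext fun x => ?_) <;>
          simp only [Prod.fst_add, Prod.snd_add, Submodule.coe_add, map_add,
            LinearMap.comp_apply, LinearMap.add_apply, LinearMap.sub_apply,
            Prod.fst, Prod.snd] <;> ring
      map_smul' := by
        intro c p
        refine Prod.ext (LinearMap.ext fun x => ?_) (LinearMap.ext fun x => ?_) <;>
          simp only [Prod.smul_fst, Prod.smul_snd, Submodule.coe_smul, map_smul,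
            RingHom.id_apply, LinearMap.comp_apply, LinearMap.add_apply,
            LinearMap.sub_apply, LinearMap.smul_apply, smul_eq_mul] <;> ring }
  have hTapp1 : ∀ (p : Vh × Λh) (v : Vh),
      (T p).1 v = a (p.1 : V) (v : V) + b (p.2 : L) (v : V) := fun p v => rfl
  have hTapp2 : ∀ (p : Vh × Λh) (μ : Λh),
      (T p).2 μ = b (μ : L) (p.1 : V) - s (p.2 : L) (μ : L) := fun p μ => rfl
  have hker : ∀ p : Vh × Λh, T p = 0 → p = 0 := by
    intro p hp
    have hp1 : ∀ v : Vh, a (p.1 : V) (v : V) + b (p.2 : L) (v : V) = 0 := by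
      intro v
      rw [← hTapp1 p v, hp]; rfl
    have hp2 : ∀ μ : Λh, b (μ : L) (p.1 : V) - s (p.2 : L) (μ : L) = 0 := by
      intro μ
      rw [← hTapp2 p μ, hp]; rfl
    have hh := hhom (p.1 : V) p.1.2 (p.2 : L) p.2.2 (by
      intro v hv μ hμ
      have e1 := hp1 ⟨v, hv⟩
      have e2 := hp2 ⟨μ, hμ⟩
      simp only at e1 e2
      linarith)
    refine Prod.ext (Subtype.ext ?_) (Subtype.ext ?_)
    · exact hh.1
    · exact hh.2
  have hinj : Function.Injective T := by
    intro p q hpq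
    have h0 : T (p - q) = 0 := by rw [map_sub, hpq, sub_self]
    have := hker _ h0
    exact sub_eq_zero.mp this
  have hrank : Module.finrank ℝ (Vh × Λh)
      = Module.finrank ℝ (Module.Dual ℝ Vh × Module.Dual ℝ Λh) := by
    rw [Module.finrank_prod, Module.finrank_prod,
      Subspace.dual_finrank_eq, Subspace.dual_finrank_eq]
  have hsurj : Function.Surjective T :=
    (LinearMap.injective_iff_surjective_of_finrank_eq_finrank hrank).mp hinj
  obtain ⟨p, hp⟩ := hsurj (F.comp Vh.subtype, 0)
  have hp1 : ∀ v : Vh, a (p.1 : V) (v : V) + b (p.2 : L) (v : V) = F (v : V) := by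
    intro v
    rw [← hTapp1 p v, hp]; rfl
  have hp2 : ∀ μ : Λh, b (μ : L) (p.1 : V) - s (p.2 : L) (μ : L) = 0 := by
    intro μ
    rw [← hTapp2 p μ, hp]; rfl
  refine ⟨p, ?_, ?_⟩
  · intro v hv μ hμ
    have e1 := hp1 ⟨v, hv⟩
    have e2 := hp2 ⟨μ, hμ⟩
    simp only at e1 e2
    linarith
  · intro q hq
    apply hinj
    rw [hp]
    refine Prod.ext (LinearMap.ext fun v => ?_) (LinearMap.ext fun μ => ?_)
    · have e := hq (v : V) v.2 0 Λh.zero_mem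
      simp only [map_zero, LinearMap.zero_apply, add_zero, sub_zero] at e
      rw [hTapp1 q v]
      simpa using e
    · have e := hq 0 Vh.zero_mem (μ : L) μ.2
      simp only [map_zero, LinearMap.zero_apply, zero_add] at e
      rw [hTapp2 q μ]
      simpa using e
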